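/- Suppose for each symbol s in a finite alphabet S with probabilities p(s) > 0 summing to 1, and positive integers N_s with Σ N_s = N, the stationary state distribution satisfies Q(i) = Q*(i) = lg((N+i)/(N+i−1)) for all states i. Then the average code length L = Σ_s p(s)(κ_s − 1 + \tilde{Q}_s), with κ_s = ⌈lg(N/N_s)⌉ and \tilde{Q}_s = Σ_{i=2^{κ_s}N_s−N+1}^N Q*(i), equals H(p) + D(p‖q) where q(s) = N_s/N, H(p) = −Σ p(s) lg p(s), and D(p‖q) = Σ p(s) lg(p(s)/q(s)). -/

import Mathlib

open Real

lemma tele (M : ℝ) (hM : 0 < M) (a b : ℕ) (ha : 1 ≤ a) (hab : a ≤ b) :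
    ∑ i ∈ Finset.Icc a b, logb 2 ((M + i)/(M + i - 1))
      = logb 2 (M + b) - logb 2 (M + a - 1) := by
  have ha' : (1:ℝ) ≤ (a:ℝ) := by exact_mod_cast ha
  induction b, hab using Nat.le_induction with
  | base =>
      rw [Finset.Icc_self, Finset.sum_singleton,
        logb_div (by positivity) (by nlinarith)]
  | succ n hn ih =>
      rw [Finset.sum_Icc_succ_top (by omega), ih]
      have hn' : (1:ℝ) ≤ (n:ℝ) := le_trans ha' (by exact_mod_cast hn)
      push_cast
      rw [logb_div (by positivity) (by nlinarith)]
      ring_nf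

lemma perterm (N Nss κs : ℕ) (hNss : 1 ≤ Nss) (hle : Nss ≤ N)
    (hκ : κs = ⌈logb 2 ((N:ℝ)/(Nss:ℝ))⌉₊) :
    (κs:ℝ) - 1 + ∑ i ∈ Finset.Icc (2^κs * Nss - N + 1) N,
        logb 2 (((N:ℝ) + i)/((N:ℝ) + i - 1)) = logb 2 ((N:ℝ)/(Nss:ℝ)) := by
  have hN1 : 1 ≤ N := le_trans hNss hle
  have hNr : (0:ℝ) < N := by exact_mod_cast hN1
  have hNsr : (0:ℝ) < Nss := by exact_mod_cast hNss
  have hler : (Nss:ℝ) ≤ N := by exact_mod_cast hle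
  set x := logb 2 ((N:ℝ)/(Nss:ℝ)) with hx
  have hx0 : 0 ≤ x := logb_nonneg (by norm_num) ((one_le_div hNsr).mpr hler)
  have h2x : (2:ℝ) ^ x = (N:ℝ)/(Nss:ℝ) :=
    rpow_logb (by norm_num) (by norm_num) (by positivity)
  have hge : (N:ℝ) ≤ 2^κs * Nss := by
    have h1 : x ≤ (κs:ℝ) := hκ ▸ Nat.le_ceil x
    have h2 := rpow_le_rpow_of_exponent_le (by norm_num : (1:ℝ) ≤ 2) h1
    rw [h2x, rpow_natCast] at h2
    rw [← div_le_iff₀ hNsr] at *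
    exact h2
  have hlt : (2:ℝ)^κs * Nss < 2*N := by
    have h1 : (κs:ℝ) < x + 1 := by rw [hκ]; exact_mod_cast Nat.ceil_lt_add_one hx0
    have h2 := rpow_lt_rpow_of_exponent_lt (by norm_num : (1:ℝ) < 2) h1
    rw [rpow_add (by norm_num), h2x, rpow_one, rpow_natCast] at h2
    calc (2:ℝ)^κs * Nss < ((N:ℝ)/Nss * 2) * Nss := by
          exact mul_lt_mul_of_pos_right h2 hNsr
      _ = 2*N := by field_simp
  have hgeN : N ≤ 2^κs * Nss := by exact_mod_cast (by push_cast; exact hge : (N:ℝ) ≤ ((2^κs * Nss : ℕ):ℝ))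
  have hltN : 2^κs * Nss < 2*N := by exact_mod_cast (by push_cast; exact hlt : ((2^κs * Nss : ℕ):ℝ) < ((2*N : ℕ):ℝ))
  set a := 2^κs * Nss - N + 1 with hadef
  have haN : a ≤ N := by omega
  have ha1 : 1 ≤ a := by omega
  rw [tele (N:ℝ) hNr a N ha1 haN]
  have hcast : (N:ℝ) + (a:ℝ) - 1 = ((2^κs * Nss : ℕ):ℝ) := by
    have : N + a = 2^κs * Nss + 1 := by omega
    have := congrArg (fun n : ℕ => (n:ℝ)) this
    push_cast at this ⊢
    linarith
  rw [hcast]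
  push_cast
  have e1 : (N:ℝ) + N = 2 * N := by ring
  rw [e1, logb_mul (by norm_num) (ne_of_gt hNr),
    logb_mul (by positivity) (ne_of_gt hNsr),
    Real.logb_pow, hx, logb_div (ne_of_gt hNr) (ne_of_gt hNsr),
    show logb 2 2 = 1 by simp]
  ring

theorem stmt13 {S : Type*} [Fintype S] (p : S → ℝ) (hp : ∀ s, 0 < p s)
    (hsum : ∑ s, p s = 1) (Ns : S → ℕ) (hNs : ∀ s, 1 ≤ Ns s)
    (N : ℕ) (hN : N = ∑ s, Ns s)
    (κ : S → ℕ) (hκ : ∀ s, κ s = ⌈logb 2 ((N:ℝ)/(Ns s:ℝ))⌉₊) :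
    ∑ s, p s * ((κ s : ℝ) - 1 +
        ∑ i ∈ Finset.Icc (2^(κ s) * Ns s - N + 1) N,
          logb 2 (((N:ℝ) + i)/((N:ℝ) + i - 1)))
    = (-∑ s, p s * logb 2 (p s)) + ∑ s, p s * logb 2 (p s / ((Ns s : ℝ)/(N:ℝ))) := by
  have hNs_le : ∀ s, Ns s ≤ N := fun s =>
    hN ▸ Finset.single_le_sum (f := fun s => Ns s) (fun _ _ => Nat.zero_le _) (Finset.mem_univ s)
  rw [← Finset.sum_neg_distrib, ← Finset.sum_add_distrib]
  refine Finset.sum_congr rfl fun s _ => ?_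
  rw [perterm N (Ns s) (κ s) (hNs s) (hNs_le s) (hκ s)]
  have hN1 : 1 ≤ N := le_trans (hNs s) (hNs_le s)
  have hNr : (0:ℝ) < N := by exact_mod_cast hN1
  have hNsr : (0:ℝ) < (Ns s : ℝ) := by exact_mod_cast hNs s
  rw [logb_div (ne_of_gt (hp s)) (by positivity),
    logb_div (ne_of_gt hNsr) (ne_of_gt hNr),
    logb_div (ne_of_gt hNr) (ne_of_gt hNsr)]
  ring
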